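/- Let H be a graph such that λ*(H) > 0, where λ*(H) := min over edges e of H of the maximum of e(F)/v(F) over all subgraphs F of H − e with v(F) ≥ 1. Then there exists a constant c(H) > 0 such that p_c(n,H) ≥ c(H)·n^{-1/λ*(H)} for every n ≥ 2. -/

import Mathlib

open Finset

/-- The edge set of the copy of `H` under the injection `f`. -/
def copyEdges {W V : Type*} (H : SimpleGraph W) (f : W ↪ V) : Set (Sym2 V) :=
  Sym2.map f '' H.edgeSet

/-- One step of the `H`-bootstrap process: infect every edge `e` for which some copy of `H`
contains `e` and has all its other edges already infected. -/
def bootStep {W V : Type*} (H : SimpleGraph W) (E : Set (Sym2 V)) : Set (Sym2 V) :=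
  E ∪ {e | ∃ f : W ↪ V, e ∈ copyEdges H f ∧ copyEdges H f ⊆ insert e E}

/-- The closure of `E` under the `H`-bootstrap process. -/
def bootClosure {W V : Type*} (H : SimpleGraph W) (E : Set (Sym2 V)) : Set (Sym2 V) :=
  ⋃ t, (bootStep H)^[t] E

/-- `E` percolates in the `H`-bootstrap process on the complete graph on `V`. -/
def Percolates {W V : Type*} (H : SimpleGraph W) (E : Set (Sym2 V)) : Prop :=
  bootClosure H E = (⊤ : SimpleGraph V).edgeSet

/-- The expectation of `X` under the Erdős–Rényi random graph `G_{n,p}`,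
written as a sum over all graphs on `[n]`, weighted by their probabilities. -/
noncomputable def gnpExp (n : ℕ) (p : ℝ) (X : Finset (Sym2 (Fin n)) → ℝ) : ℝ :=
  ∑ E ∈ (⊤ : SimpleGraph (Fin n)).edgeFinset.powerset,
    p ^ E.card * (1 - p) ^ ((⊤ : SimpleGraph (Fin n)).edgeFinset.card - E.card) * X E

/- probability of event `A` under `G_{n,p}` -/
open Classical in
noncomputable def gnpProb (n : ℕ) (p : ℝ) (A : Finset (Sym2 (Fin n)) → Prop) : ℝ :=
  gnpExp n p (fun E => if A E then 1 else 0)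

/-- The critical probability for `H`-bootstrap percolation on `K_n`. -/
noncomputable def pc {W : Type*} (n : ℕ) (H : SimpleGraph W) : ℝ :=
  sInf {p : ℝ | p ∈ Set.Icc (0 : ℝ) 1 ∧
    1 / 2 ≤ gnpProb n p (fun E => Percolates H (↑E : Set (Sym2 (Fin n))))}

/-- `λ(r) = (C(r,2) - 2)/(r - 2)`. -/
noncomputable def lam (r : ℕ) : ℝ := ((r.choose 2 : ℝ) - 2) / ((r : ℝ) - 2)

/-- `λ*(H) = min_{e ∈ E(H)} max_{F ⊆ H - e, v(F) ≥ 1} e(F)/v(F)`. -/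
noncomputable def lamStar {W : Type*} (H : SimpleGraph W) : ℝ :=
  sInf {x : ℝ | ∃ e ∈ H.edgeSet, x =
    sSup {y : ℝ | ∃ F : (H.deleteEdges {e}).Subgraph, F.verts.Nonempty ∧
      y = (F.edgeSet.ncard : ℝ) / (F.verts.ncard : ℝ)}}


section Aux

lemma sum_weights {α : Type*} [DecidableEq α] (T : Finset α) (p : ℝ) :
    ∑ E ∈ T.powerset, p ^ E.card * (1 - p) ^ (T.card - E.card) = 1 := by
  have h2 : ∑ E ∈ T.powerset, p ^ E.card * (1 - p) ^ (T.card - E.card)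
      = ∑ t ∈ T.powerset, (∏ _i ∈ t, p) * ∏ _i ∈ T \ t, (1 - p) := by
    apply Finset.sum_congr rfl
    intro E hE
    rw [Finset.prod_const, Finset.prod_const, Finset.card_sdiff_of_subset (Finset.mem_powerset.mp hE)]
  rw [h2, ← Finset.prod_add]
  simp

open Classical in
lemma sum_weights_superset {α : Type*} [DecidableEq α] (T S : Finset α) (hS : S ⊆ T) (p : ℝ) :
    ∑ E ∈ T.powerset, p ^ E.card * (1 - p) ^ (T.card - E.card) * (if S ⊆ E then (1:ℝ) else 0)
      = p ^ S.card := by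
  have hsplit : ∀ E ∈ T.powerset,
      p ^ E.card * (1 - p) ^ (T.card - E.card) * (if S ⊆ E then (1:ℝ) else 0)
      = if S ⊆ E then p ^ E.card * (1 - p) ^ (T.card - E.card) else 0 := by
    intro E _; split <;> ring
  rw [Finset.sum_congr rfl hsplit, ← Finset.sum_filter]
  have key : ∑ E ∈ T.powerset.filter (fun E => S ⊆ E),
        p ^ E.card * (1 - p) ^ (T.card - E.card)
      = ∑ E' ∈ (T \ S).powerset, p ^ (S.card + E'.card) * (1 - p) ^ ((T \ S).card - E'.card) := by
    apply Finset.sum_nbij' (fun E => E \ S) (fun E' => S ∪ E')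
    · intro E hE
      simp only [Finset.mem_filter, Finset.mem_powerset] at hE
      exact Finset.mem_powerset.mpr (Finset.sdiff_subset_sdiff hE.1 le_rfl)
    · intro E' hE'
      simp only [Finset.mem_powerset] at hE'
      simp only [Finset.mem_filter, Finset.mem_powerset]
      exact ⟨Finset.union_subset hS (hE'.trans Finset.sdiff_subset), Finset.subset_union_left⟩
    · intro E hE
      simp only [Finset.mem_filter, Finset.mem_powerset] at hE
      exact Finset.union_sdiff_of_subset hE.2
    · intro E' hE'
      simp only [Finset.mem_powerset] at hE'
      exact Finset.union_sdiff_cancel_left (Finset.disjoint_left.mpr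
        (fun a haS haE' => (Finset.mem_sdiff.mp (hE' haE')).2 haS))
    · intro E hE
      simp only [Finset.mem_filter, Finset.mem_powerset] at hE
      have c1 : S.card ≤ E.card := Finset.card_le_card hE.2
      have c2 : E.card ≤ T.card := Finset.card_le_card hE.1
      have d1 : (E \ S).card = E.card - S.card := Finset.card_sdiff_of_subset hE.2
      have d2 : (T \ S).card = T.card - S.card := Finset.card_sdiff_of_subset hS
      have e1 : S.card + (E \ S).card = E.card := by omega
      have e2 : T.card - E.card = (T \ S).card - (E \ S).card := by omega
      rw [e1, e2]
  rw [key]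
  have h3 : ∀ E' ∈ (T \ S).powerset, p ^ (S.card + E'.card) * (1 - p) ^ ((T \ S).card - E'.card)
      = p ^ S.card * (p ^ E'.card * (1 - p) ^ ((T \ S).card - E'.card)) := by
    intro E' _; rw [pow_add]; ring
  rw [Finset.sum_congr rfl h3, ← Finset.mul_sum, sum_weights (T \ S) p, mul_one]

lemma gnpProb_superset {n : ℕ} (p : ℝ) (S : Finset (Sym2 (Fin n)))
    (hS : S ⊆ (⊤ : SimpleGraph (Fin n)).edgeFinset) :
    gnpProb n p (fun E => S ⊆ E) = p ^ S.card := by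
  classical
  unfold gnpProb gnpExp
  rw [← sum_weights_superset _ _ hS p]
  apply Finset.sum_congr rfl
  intro E _
  by_cases h : S ⊆ E <;> simp [h]

lemma gnpProb_le_sum {n : ℕ} {p : ℝ} (hp0 : 0 ≤ p) (hp1 : p ≤ 1)
    {ι : Type*} (s : Finset ι) (A : Finset (Sym2 (Fin n)) → Prop)
    (B : ι → Finset (Sym2 (Fin n)) → Prop)
    (h : ∀ E, A E → ∃ i ∈ s, B i E) :
    gnpProb n p A ≤ ∑ i ∈ s, gnpProb n p (B i) := by
  classical
  unfold gnpProb gnpExp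
  rw [Finset.sum_comm]
  apply Finset.sum_le_sum
  intro E _
  have hw : 0 ≤ p ^ E.card *
      (1 - p) ^ ((⊤ : SimpleGraph (Fin n)).edgeFinset.card - E.card) :=
    mul_nonneg (pow_nonneg hp0 _) (pow_nonneg (by linarith) _)
  calc p ^ E.card * (1 - p) ^ ((⊤ : SimpleGraph (Fin n)).edgeFinset.card - E.card) *
        (if A E then (1:ℝ) else 0)
      ≤ p ^ E.card * (1 - p) ^ ((⊤ : SimpleGraph (Fin n)).edgeFinset.card - E.card) *
        (∑ i ∈ s, if B i E then (1:ℝ) else 0) := by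
        apply mul_le_mul_of_nonneg_left _ hw
        by_cases hA : A E
        · obtain ⟨i₀, hi₀, hBi₀⟩ := h E hA
          rw [if_pos hA]
          calc (1:ℝ) = if B i₀ E then (1:ℝ) else 0 := by rw [if_pos hBi₀]
            _ ≤ ∑ i ∈ s, if B i E then (1:ℝ) else 0 :=
              Finset.single_le_sum (f := fun i => if B i E then (1:ℝ) else 0)
                (fun i _ => by positivity) hi₀
        · rw [if_neg hA]
          exact Finset.sum_nonneg (fun i _ => by positivity)
    _ = ∑ i ∈ s, p ^ E.card * (1 - p) ^ ((⊤ : SimpleGraph (Fin n)).edgeFinset.card - E.card) *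
        (if B i E then (1:ℝ) else 0) := by rw [Finset.mul_sum]

lemma gnpProb_one {n : ℕ} (A : Finset (Sym2 (Fin n)) → Prop)
    (hA : A (⊤ : SimpleGraph (Fin n)).edgeFinset) : gnpProb n 1 A = 1 := by
  classical
  unfold gnpProb gnpExp
  rw [Finset.sum_eq_single_of_mem ((⊤ : SimpleGraph (Fin n)).edgeFinset)
    (Finset.mem_powerset_self _)]
  · beta_reduce
    rw [if_pos hA]
    simp
  · intro E hE hne
    have h1 : E.card < (⊤ : SimpleGraph (Fin n)).edgeFinset.card :=
      Finset.card_lt_card (Finset.ssubset_iff_subset_ne.mpr ⟨Finset.mem_powerset.mp hE, hne⟩)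
    rw [sub_self, zero_pow (by omega), mul_zero, zero_mul]

lemma bootStep_subset_top {W V : Type*} (H : SimpleGraph W) (E : Set (Sym2 V))
    (hE : E ⊆ (⊤ : SimpleGraph V).edgeSet) :
    bootStep H E ⊆ (⊤ : SimpleGraph V).edgeSet := by
  rintro e (he | ⟨f, ⟨x, hx, rfl⟩, -⟩)
  · exact hE he
  · rw [SimpleGraph.edgeSet_top, Set.mem_compl_iff, Sym2.mem_diagSet, Sym2.isDiag_map f.injective]
    exact H.not_isDiag_of_mem_edgeSet hx

lemma perc_top {W V : Type*} (H : SimpleGraph W) :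
    Percolates H ((⊤ : SimpleGraph V).edgeSet) := by
  unfold Percolates bootClosure
  apply Set.Subset.antisymm
  · apply Set.iUnion_subset
    intro t
    induction t with
    | zero => exact fun e he => he
    | succ t ih =>
        rw [Function.iterate_succ_apply']
        exact bootStep_subset_top H _ ih
  · exact Set.subset_iUnion_of_subset 0 (fun e he => he)

lemma perc_new_edge {W V : Type*} (H : SimpleGraph W) (E : Set (Sym2 V))
    (hperc : Percolates H E) (hne : E ≠ (⊤ : SimpleGraph V).edgeSet) :
    ∃ e₀ ∈ H.edgeSet, ∃ f : W ↪ V, Sym2.map f '' (H.edgeSet \ {e₀}) ⊆ E := by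
  have hstep : ¬ (bootStep H E ⊆ E) := by
    intro h
    have hfix : bootStep H E = E := Set.Subset.antisymm h Set.subset_union_left
    have hall : ∀ t, (bootStep H)^[t] E = E := by
      intro t; induction t with
      | zero => rfl
      | succ t ih => rw [Function.iterate_succ_apply', ih, hfix]
    apply hne
    rw [← hperc]
    simp only [bootClosure, hall, Set.iUnion_const]
  obtain ⟨e, he, heE⟩ := Set.not_subset.mp hstep
  rcases he with heE' | ⟨f, ⟨x, hx, rfl⟩, hsub⟩
  · exact absurd heE' heE
  · refine ⟨x, hx, f, ?_⟩
    rintro _ ⟨y, ⟨hy, hyx⟩, rfl⟩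
    rcases Set.mem_insert_iff.mp (hsub ⟨y, hy, rfl⟩) with h | h
    · exact absurd (Sym2.map.injective f.injective h) hyx
    · exact h

end Aux


lemma sym2_map_injOn_aux {α β : Type*} (ψ : α → β) (s : Set α) (hinj : Set.InjOn ψ s) :
    ∀ x y : Sym2 α, (∀ w ∈ x, w ∈ s) → (∀ w ∈ y, w ∈ s) →
      Sym2.map ψ x = Sym2.map ψ y → x = y := by
  intro x y
  induction x using Sym2.ind with | _ a b =>
  induction y using Sym2.ind with | _ c d =>
  intro hx hy h
  have ha := hx a (Sym2.mem_mk_left a b)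
  have hb := hx b (Sym2.mem_mk_right a b)
  have hc := hy c (Sym2.mem_mk_left c d)
  have hd := hy d (Sym2.mem_mk_right c d)
  rw [Sym2.map_pair_eq, Sym2.map_pair_eq, Sym2.eq_iff] at h
  rw [Sym2.eq_iff]
  rcases h with ⟨h1, h2⟩ | ⟨h1, h2⟩
  · exact Or.inl ⟨hinj ha hc h1, hinj hb hd h2⟩
  · exact Or.inr ⟨hinj ha hd h1, hinj hb hc h2⟩

lemma sym2_map_not_isDiag_aux {α β : Type*} (ψ : α → β) (s : Set α) (hinj : Set.InjOn ψ s) :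
    ∀ x : Sym2 α, (∀ w ∈ x, w ∈ s) → ¬ x.IsDiag → ¬ (Sym2.map ψ x).IsDiag := by
  intro x
  induction x using Sym2.ind with | _ a b =>
  intro hx hnd hcon
  rw [Sym2.map_pair_eq, Sym2.mk_isDiag_iff] at hcon
  exact hnd (Sym2.mk_isDiag_iff.mpr
    (hinj (hx a (Sym2.mem_mk_left a b)) (hx b (Sym2.mem_mk_right a b)) hcon))

open Classical in
lemma exists_pattern {W : Type*} [Fintype W] (H : SimpleGraph W) (hpos : 0 < lamStar H)
    {e₀ : Sym2 W} (he₀ : e₀ ∈ H.edgeSet) :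
    ∃ (m k : ℕ) (S : Finset (Sym2 (Fin m))), 1 ≤ m ∧ 1 ≤ k ∧ S.card = k ∧
      (∀ e ∈ S, ¬ e.IsDiag) ∧ lamStar H * m ≤ k ∧
      (∀ (V : Type) (E : Set (Sym2 V)) (f : W ↪ V),
        Sym2.map f '' (H.edgeSet \ {e₀}) ⊆ E →
        ∃ g : Fin m ↪ V, Sym2.map g '' ↑S ⊆ E) := by
  classical
  -- the set of densities
  set Y := {y : ℝ | ∃ F : (H.deleteEdges {e₀}).Subgraph, F.verts.Nonempty ∧
      y = (F.edgeSet.ncard : ℝ) / (F.verts.ncard : ℝ)} with hYdef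
  obtain ⟨w₀⟩ : Nonempty W := by
    revert he₀
    induction e₀ using Sym2.ind with | _ x y => exact fun _ => ⟨x⟩
  have hYne : Y.Nonempty := by
    refine ⟨_, (H.deleteEdges {e₀}).singletonSubgraph w₀, Set.singleton_nonempty w₀, rfl⟩
  have hYfin : Y.Finite := by
    have hsub : Y ⊆ (fun q : ℕ × ℕ => (q.1 : ℝ) / (q.2 : ℝ)) ''
        (Set.range (fun q : Fin (Fintype.card (Sym2 W) + 1) × Fin (Fintype.card W + 1) =>
          ((q.1 : ℕ), (q.2 : ℕ)))) := by
      rintro y ⟨F, hne, rfl⟩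
      have h1 : F.edgeSet.ncard ≤ Fintype.card (Sym2 W) := by
        have := Set.ncard_le_ncard (Set.subset_univ F.edgeSet) Set.finite_univ
        rwa [Set.ncard_univ, Nat.card_eq_fintype_card] at this
      have h2 : F.verts.ncard ≤ Fintype.card W := by
        have := Set.ncard_le_ncard (Set.subset_univ F.verts) Set.finite_univ
        rwa [Set.ncard_univ, Nat.card_eq_fintype_card] at this
      exact ⟨(F.edgeSet.ncard, F.verts.ncard),
        ⟨(⟨F.edgeSet.ncard, by omega⟩, ⟨F.verts.ncard, by omega⟩), rfl⟩, rfl⟩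
    exact Set.Finite.subset ((Set.finite_range _).image _) hsub
  have hmem : sSup Y ∈ Y := Set.Nonempty.csSup_mem hYne hYfin
  have hΛ : lamStar H ≤ sSup Y := by
    have hbdd : BddBelow {x : ℝ | ∃ e ∈ H.edgeSet, x =
        sSup {y : ℝ | ∃ F : (H.deleteEdges {e}).Subgraph, F.verts.Nonempty ∧
          y = (F.edgeSet.ncard : ℝ) / (F.verts.ncard : ℝ)}} := by
      by_contra hb
      rw [lamStar, Real.sInf_of_not_bddBelow hb] at hpos
      exact lt_irrefl _ hpos
    exact csInf_le hbdd ⟨e₀, he₀, rfl⟩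
  obtain ⟨F, hFne, hFeq⟩ := hmem
  set m := F.verts.ncard with hmdef
  set k := F.edgeSet.ncard with hkdef
  have hm : 0 < m := (Set.ncard_pos (Set.toFinite _)).mpr hFne
  have hlam : lamStar H * m ≤ k := by
    rw [hFeq] at hΛ
    exact (le_div_iff₀ (by exact_mod_cast hm)).mp hΛ
  have hk : 1 ≤ k := by
    have h0 : (0:ℝ) < lamStar H * m := by
      apply mul_pos hpos
      exact_mod_cast hm
    have : (0:ℝ) < (k:ℝ) := lt_of_lt_of_le h0 hlam
    exact_mod_cast this
  -- vertices in edges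
  have hvert : ∀ x ∈ F.edgeSet, ∀ w ∈ x, w ∈ F.verts :=
    fun x hx w hw => SimpleGraph.Subgraph.mem_verts_of_mem_edge hx hw
  -- the equivalence
  have hcard : Fintype.card ↥F.verts = m := by
    rw [← Nat.card_eq_fintype_card, Nat.card_coe_set_eq]
  let equiv : ↥F.verts ≃ Fin m := Fintype.equivFinOfCardEq hcard
  let ψ : W → Fin m := fun w => if h : w ∈ F.verts then equiv ⟨w, h⟩ else ⟨0, hm⟩
  have hψ : ∀ w (h : w ∈ F.verts), ψ w = equiv ⟨w, h⟩ := fun w h => dif_pos h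
  have hψinj : Set.InjOn ψ F.verts := by
    intro a ha b hb h
    rw [hψ a ha, hψ b hb] at h
    have := equiv.injective h
    exact congrArg Subtype.val this
  have hedgeinj : Set.InjOn (Sym2.map ψ) F.edgeSet := fun x hx y hy h =>
    sym2_map_injOn_aux ψ F.verts hψinj x y (hvert x hx) (hvert y hy) h
  have hfin : (Sym2.map ψ '' F.edgeSet).Finite := (Set.toFinite F.edgeSet).image _
  refine ⟨m, k, hfin.toFinset, hm, hk, ?_, ?_, hlam, ?_⟩
  · rw [← Set.ncard_eq_toFinset_card _ hfin, Set.ncard_image_of_injOn hedgeinj]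
  · intro e he
    rw [Set.Finite.mem_toFinset] at he
    obtain ⟨x, hx, rfl⟩ := he
    have hnd : ¬ x.IsDiag :=
      (H.deleteEdges {e₀}).not_isDiag_of_mem_edgeSet (F.edgeSet_subset hx)
    exact sym2_map_not_isDiag_aux ψ F.verts hψinj x (hvert x hx) hnd
  · intro V E f hf
    have hginj : Function.Injective (fun i => f ((equiv.symm i : ↥F.verts) : W)) := by
      intro i j h
      have h2 := f.injective h
      have h3 : (equiv.symm i : ↥F.verts) = (equiv.symm j : ↥F.verts) := Subtype.ext h2
      exact equiv.symm.injective h3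
    refine ⟨⟨fun i => f ((equiv.symm i : ↥F.verts) : W), hginj⟩, ?_⟩
    rintro _ ⟨x', hx', rfl⟩
    rw [Set.Finite.coe_toFinset] at hx'
    obtain ⟨x, hx, rfl⟩ := hx'
    rw [Sym2.map_map]
    have hcongr : Sym2.map
        (⇑(⟨fun i => f ((equiv.symm i : ↥F.verts) : W), hginj⟩ : Fin m ↪ V) ∘ ψ) x
        = Sym2.map (⇑f) x := by
      apply Sym2.map_congr
      intro w hw
      have hwv : w ∈ F.verts := hvert x hx w hw
      simp only [Function.Embedding.coeFn_mk, Function.comp_apply, hψ w hwv,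
        Equiv.symm_apply_apply]
    rw [hcongr]
    apply hf
    refine ⟨x, ?_, rfl⟩
    have := F.edgeSet_subset hx
    rwa [SimpleGraph.edgeSet_deleteEdges] at this


lemma gnpProb_le_add {n : ℕ} {p : ℝ} (hp0 : 0 ≤ p) (hp1 : p ≤ 1)
    (A B C : Finset (Sym2 (Fin n)) → Prop) (h : ∀ E, A E → B E ∨ C E) :
    gnpProb n p A ≤ gnpProb n p B + gnpProb n p C := by
  classical
  unfold gnpProb gnpExp
  beta_reduce
  rw [← Finset.sum_add_distrib]
  apply Finset.sum_le_sum
  intro E _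
  have hw : 0 ≤ p ^ E.card *
      (1 - p) ^ ((⊤ : SimpleGraph (Fin n)).edgeFinset.card - E.card) :=
    mul_nonneg (pow_nonneg hp0 _) (pow_nonneg (by linarith) _)
  rw [mul_assoc, mul_assoc, mul_assoc, ← mul_add]
  apply mul_le_mul_of_nonneg_left _ (pow_nonneg hp0 _)
  rw [← mul_add]
  apply mul_le_mul_of_nonneg_left _ (pow_nonneg (by linarith : (0:ℝ) ≤ 1 - p) _)
  by_cases hA : A E
  · rcases h E hA with hB | hC
    · rw [if_pos hA, if_pos hB]
      have : (0:ℝ) ≤ if C E then 1 else 0 := by positivity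
      linarith
    · rw [if_pos hA, if_pos hC]
      have : (0:ℝ) ≤ if B E then 1 else 0 := by positivity
      linarith
  · rw [if_neg hA]
    have h1 : (0:ℝ) ≤ if B E then 1 else 0 := by positivity
    have h2 : (0:ℝ) ≤ if C E then 1 else 0 := by positivity
    linarith

set_option maxHeartbeats 2000000 in
/-- **Proposition 29.** For every graph `H` with `λ*(H) > 0` there is a constant
`c(H) > 0` such that `p_c(n,H) ≥ c(H) n^{-1/λ*(H)}` for every `n ≥ 2`. -/
theorem pc_general_lower {W : Type*} [Fintype W] (H : SimpleGraph W)
    (hpos : 0 < lamStar H) :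
    ∃ c : ℝ, 0 < c ∧ ∀ n : ℕ, 2 ≤ n →
      c * (n : ℝ) ^ (-(1 / lamStar H)) ≤ pc n H := by
  classical
  set T : Finset (Sym2 W) := H.edgeSet.toFinite.toFinset with hT
  set M : ℕ := T.card with hM
  set c : ℝ := 1 / (4 * ((M : ℝ) + 1)) with hc
  have hMpos : (0:ℝ) < (M : ℝ) + 1 := by positivity
  have hcpos : 0 < c := by rw [hc]; positivity
  have hc1 : c ≤ 1 := by
    rw [hc]
    rw [div_le_one (by positivity)]
    nlinarith
  refine ⟨c, hcpos, ?_⟩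
  intro n hn
  have hn1 : (1:ℝ) ≤ (n:ℝ) := by exact_mod_cast Nat.one_le_of_lt hn
  have hexp : -(1 / lamStar H) ≤ 0 := by
    have : 0 < 1 / lamStar H := by positivity
    linarith
  have hx1 : (n:ℝ) ^ (-(1 / lamStar H)) ≤ 1 :=
    Real.rpow_le_one_of_one_le_of_nonpos hn1 hexp
  apply le_csInf
  · -- p = 1 belongs to the set
    refine ⟨1, ⟨Set.mem_Icc.mpr ⟨zero_le_one, le_refl 1⟩, ?_⟩⟩
    have hperc : Percolates H
        (↑((⊤ : SimpleGraph (Fin n)).edgeFinset) : Set (Sym2 (Fin n))) := by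
      rw [SimpleGraph.coe_edgeFinset]
      exact perc_top H
    rw [gnpProb_one _ hperc]
    norm_num
  · rintro p ⟨hpIcc, hprob⟩
    obtain ⟨hp0, hp1⟩ := Set.mem_Icc.mp hpIcc
    by_contra hcon
    push_neg at hcon
    have hple : p ≤ c * (n:ℝ) ^ (-(1 / lamStar H)) := le_of_lt hcon
    have hpc : p ≤ c := hple.trans (by nlinarith)
    -- Step 1: binary union bound
    have hsplit : ∀ E : Finset (Sym2 (Fin n)),
        Percolates H (↑E : Set (Sym2 (Fin n))) →
        ((⊤ : SimpleGraph (Fin n)).edgeFinset ⊆ E) ∨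
        (∃ e₀ ∈ H.edgeSet, ∃ f : W ↪ Fin n,
          Sym2.map ⇑f '' (H.edgeSet \ {e₀}) ⊆ (↑E : Set (Sym2 (Fin n)))) := by
      intro E hE
      by_cases hfull : (⊤ : SimpleGraph (Fin n)).edgeFinset ⊆ E
      · exact Or.inl hfull
      · refine Or.inr (perc_new_edge H (↑E : Set (Sym2 (Fin n))) hE ?_)
        intro hcon2
        apply hfull
        intro x hx
        rw [SimpleGraph.mem_edgeFinset] at hx
        rw [← hcon2] at hx
        exact hx
    have h1 := gnpProb_le_add hp0 hp1 _ _ _ hsplit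
    -- Step 2: the full-graph event
    have hTpos : 1 ≤ (⊤ : SimpleGraph (Fin n)).edgeFinset.card := by
      refine Finset.card_pos.mpr ⟨s(⟨0, by omega⟩, ⟨1, by omega⟩), ?_⟩
      rw [SimpleGraph.mem_edgeFinset, SimpleGraph.mem_edgeSet]
      simp [Fin.ext_iff]
    have hfullbound : gnpProb n p
        (fun E => (⊤ : SimpleGraph (Fin n)).edgeFinset ⊆ E) ≤ c := by
      rw [gnpProb_superset p _ (le_refl _)]
      calc p ^ (⊤ : SimpleGraph (Fin n)).edgeFinset.card ≤ p ^ 1 :=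
            pow_le_pow_of_le_one hp0 hp1 hTpos
        _ = p := pow_one p
        _ ≤ c := hpc
    -- Step 3: per-edge bound
    have hBbound : ∀ e₀ ∈ T, gnpProb n p (fun E => ∃ f : W ↪ Fin n,
        Sym2.map ⇑f '' (H.edgeSet \ {e₀}) ⊆ (↑E : Set (Sym2 (Fin n)))) ≤ c := by
      intro e₀ he₀T
      have he₀ : e₀ ∈ H.edgeSet := (Set.Finite.mem_toFinset _).mp he₀T
      obtain ⟨m, k, S, hm, hk, hScard, hSnd, hlamk, hprop⟩ := exists_pattern H hpos he₀
      -- union bound over embeddings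
      have hunion := gnpProb_le_sum (n := n) (p := p) hp0 hp1 (Finset.univ : Finset (Fin m ↪ Fin n))
        (fun E => ∃ f : W ↪ Fin n,
          Sym2.map ⇑f '' (H.edgeSet \ {e₀}) ⊆ (↑E : Set (Sym2 (Fin n))))
        (fun g E => S.map ⟨Sym2.map ⇑g, Sym2.map.injective g.injective⟩ ⊆ E)
        (by
          rintro E ⟨f, hf⟩
          obtain ⟨g, hg⟩ := hprop (Fin n) (↑E) f hf
          refine ⟨g, Finset.mem_univ g, ?_⟩
          intro x hx
          obtain ⟨y, hy, rfl⟩ := Finset.mem_map.mp hx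
          exact Finset.mem_coe.mp (hg ⟨y, Finset.mem_coe.mpr hy, rfl⟩))
      have hterm : ∀ g : Fin m ↪ Fin n, gnpProb n p
          (fun E => S.map ⟨Sym2.map ⇑g, Sym2.map.injective g.injective⟩ ⊆ E)
          = p ^ k := by
        intro g
        have hsub : S.map ⟨Sym2.map ⇑g, Sym2.map.injective g.injective⟩ ⊆
            (⊤ : SimpleGraph (Fin n)).edgeFinset := by
          intro x hx
          obtain ⟨y, hy, rfl⟩ := Finset.mem_map.mp hx
          rw [SimpleGraph.mem_edgeFinset, SimpleGraph.edgeSet_top]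
          exact fun hd => hSnd y hy ((Sym2.isDiag_map g.injective).mp hd)
        rw [gnpProb_superset p _ hsub, Finset.card_map, hScard]
      have hcount : ((Fintype.card (Fin m ↪ Fin n)) : ℝ) ≤ (n:ℝ) ^ (m:ℕ) := by
        rw [Fintype.card_embedding_eq, Fintype.card_fin, Fintype.card_fin]
        exact_mod_cast Nat.descFactorial_le_pow n m
      have hpk : 0 ≤ p ^ k := pow_nonneg hp0 k
      have hsum : ∑ _g ∈ (Finset.univ : Finset (Fin m ↪ Fin n)), p ^ k
          ≤ (n:ℝ) ^ (m:ℕ) * p ^ k := by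
        rw [Finset.sum_const, nsmul_eq_mul, Finset.card_univ]
        exact mul_le_mul_of_nonneg_right hcount hpk
      -- analytic bound
      have hmain : (n:ℝ) ^ (m:ℕ) * p ^ k ≤ c := by
        have hn0 : (0:ℝ) < (n:ℝ) := by linarith
        have hpow1 : p ^ k ≤ (c * (n:ℝ) ^ (-(1 / lamStar H))) ^ k :=
          pow_le_pow_left₀ hp0 hple k
        have hpow2 : (c * (n:ℝ) ^ (-(1 / lamStar H))) ^ k
            = c ^ k * ((n:ℝ) ^ (-(1 / lamStar H))) ^ k := mul_pow _ _ _
        have hpow3 : ((n:ℝ) ^ (-(1 / lamStar H))) ^ k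
            = (n:ℝ) ^ (-((k:ℝ) / lamStar H)) := by
          rw [← Real.rpow_natCast ((n:ℝ) ^ (-(1 / lamStar H))) k,
            ← Real.rpow_mul (le_of_lt hn0)]
          congr 1
          ring
        have hexp2 : (m:ℝ) + -((k:ℝ) / lamStar H) ≤ 0 := by
          have hmk : (m:ℝ) ≤ (k:ℝ) / lamStar H := by
            rw [le_div_iff₀ hpos]
            nlinarith [hlamk]
          linarith
        have hpow4 : (n:ℝ) ^ (m:ℕ) * (n:ℝ) ^ (-((k:ℝ) / lamStar H)) ≤ 1 := by
          rw [← Real.rpow_natCast (n:ℝ) m, ← Real.rpow_add hn0]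
          exact Real.rpow_le_one_of_one_le_of_nonpos hn1 hexp2
        have hck : c ^ k ≤ c := by
          calc c ^ k ≤ c ^ 1 := pow_le_pow_of_le_one (le_of_lt hcpos) hc1 hk
            _ = c := pow_one c
        have hnm0 : (0:ℝ) ≤ (n:ℝ) ^ (m:ℕ) := pow_nonneg (le_of_lt hn0) m
        calc (n:ℝ) ^ (m:ℕ) * p ^ k
            ≤ (n:ℝ) ^ (m:ℕ) * (c ^ k * (n:ℝ) ^ (-((k:ℝ) / lamStar H))) := by
              apply mul_le_mul_of_nonneg_left _ hnm0
              rw [← hpow3, ← hpow2]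
              exact hpow1
          _ = c ^ k * ((n:ℝ) ^ (m:ℕ) * (n:ℝ) ^ (-((k:ℝ) / lamStar H))) := by ring
          _ ≤ c ^ k * 1 := by
              apply mul_le_mul_of_nonneg_left hpow4 (pow_nonneg (le_of_lt hcpos) k)
          _ = c ^ k := mul_one _
          _ ≤ c := hck
      calc gnpProb n p (fun E => ∃ f : W ↪ Fin n,
            Sym2.map ⇑f '' (H.edgeSet \ {e₀}) ⊆ (↑E : Set (Sym2 (Fin n))))
          ≤ ∑ g ∈ (Finset.univ : Finset (Fin m ↪ Fin n)), gnpProb n p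
            (fun E => S.map ⟨Sym2.map ⇑g, Sym2.map.injective g.injective⟩ ⊆ E) := hunion
        _ = ∑ _g ∈ (Finset.univ : Finset (Fin m ↪ Fin n)), p ^ k :=
            Finset.sum_congr rfl (fun g _ => hterm g)
        _ ≤ (n:ℝ) ^ (m:ℕ) * p ^ k := hsum
        _ ≤ c := hmain
    -- Step 4: union bound over edges of H
    have himp2 : ∀ E : Finset (Sym2 (Fin n)),
        (∃ e₀ ∈ H.edgeSet, ∃ f : W ↪ Fin n,
          Sym2.map ⇑f '' (H.edgeSet \ {e₀}) ⊆ (↑E : Set (Sym2 (Fin n)))) →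
        ∃ e₀ ∈ T, ∃ f : W ↪ Fin n,
          Sym2.map ⇑f '' (H.edgeSet \ {e₀}) ⊆ (↑E : Set (Sym2 (Fin n))) := by
      rintro E ⟨e₀, he₀, f, hf⟩
      exact ⟨e₀, (Set.Finite.mem_toFinset _).mpr he₀, f, hf⟩
    have h2 := gnpProb_le_sum (n := n) (p := p) hp0 hp1 T
      (fun E => ∃ e₀ ∈ H.edgeSet, ∃ f : W ↪ Fin n,
        Sym2.map ⇑f '' (H.edgeSet \ {e₀}) ⊆ (↑E : Set (Sym2 (Fin n))))
      (fun e₀ E => ∃ f : W ↪ Fin n,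
        Sym2.map ⇑f '' (H.edgeSet \ {e₀}) ⊆ (↑E : Set (Sym2 (Fin n))))
      himp2
    have h3 : ∑ e₀ ∈ T, gnpProb n p (fun E => ∃ f : W ↪ Fin n,
        Sym2.map ⇑f '' (H.edgeSet \ {e₀}) ⊆ (↑E : Set (Sym2 (Fin n)))) ≤ (M:ℝ) * c := by
      calc ∑ e₀ ∈ T, gnpProb n p (fun E => ∃ f : W ↪ Fin n,
            Sym2.map ⇑f '' (H.edgeSet \ {e₀}) ⊆ (↑E : Set (Sym2 (Fin n))))
          ≤ ∑ _e₀ ∈ T, c := Finset.sum_le_sum hBbound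
        _ = (M:ℝ) * c := by rw [Finset.sum_const, nsmul_eq_mul, hM]
    have hfinal : gnpProb n p (fun E => Percolates H (↑E : Set (Sym2 (Fin n))))
        ≤ ((M:ℝ) + 1) * c := by
      calc gnpProb n p (fun E => Percolates H (↑E : Set (Sym2 (Fin n))))
          ≤ gnpProb n p (fun E => (⊤ : SimpleGraph (Fin n)).edgeFinset ⊆ E)
            + gnpProb n p (fun E => ∃ e₀ ∈ H.edgeSet, ∃ f : W ↪ Fin n,
              Sym2.map ⇑f '' (H.edgeSet \ {e₀}) ⊆ (↑E : Set (Sym2 (Fin n)))) := h1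
        _ ≤ c + (M:ℝ) * c := add_le_add hfullbound (h2.trans h3)
        _ = ((M:ℝ) + 1) * c := by ring
    have hq : ((M:ℝ) + 1) * c = 1 / 4 := by
      rw [hc]
      field_simp
    rw [hq] at hfinal
    linarith
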